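/- arXiv:2511.09285 — 2 statements merged into one kernel-verified Lean document; each statement's English description precedes it below -/
import Mathlib

section
/- Let f : ℝ → ℝ be continuous with f(0) = 0, f continuously differentiable on (0,∞) with f'(t) ≥ 0 for t > 0, and suppose there exists θ > 2 such that 0 < θ·F(t) ≤ f(t)·t² for all t > 0, where F(t) = ∫₀ᵗ f(s)·s ds. Then there exist constants A, B > 0 such that F(t) ≥ A·t^θ − B·t² for all t ≥ 0. -/
/-- Under the Ambrosetti–Rabinowitz condition there exist `A, B > 0`
with `F t ≥ A t^θ - B t^2` for all `t ≥ 0`. -/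
theorem stmt_0 (f F : ℝ → ℝ) (θ : ℝ)
    (hf_cont : Continuous f) (hf0 : f 0 = 0)
    (hf_diff : ContDiffOn ℝ 1 f (Set.Ioi 0))
    (hf_deriv : ∀ t > (0:ℝ), 0 ≤ deriv f t)
    (hθ : 2 < θ)
    (hF : ∀ t : ℝ, F t = ∫ s in (0:ℝ)..t, f s * s)
    (hAR : ∀ t > (0:ℝ), 0 < θ * F t ∧ θ * F t ≤ f t * t ^ 2) :
    ∃ A > (0:ℝ), ∃ B > (0:ℝ), ∀ t ≥ (0:ℝ), F t ≥ A * t ^ θ - B * t ^ 2 := by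
  have hθ0 : (0:ℝ) < θ := by linarith
  have hcont : Continuous (fun s => f s * s) := hf_cont.mul continuous_id
  have hFd : ∀ t : ℝ, HasDerivAt F (f t * t) t := by
    intro t
    have h1 : HasDerivAt (fun u => ∫ s in (0:ℝ)..u, f s * s) (f t * t) t :=
      intervalIntegral.integral_hasDerivAt_right (hcont.intervalIntegrable 0 t)
        hcont.aestronglyMeasurable.stronglyMeasurableAtFilter hcont.continuousAt
    exact h1.congr_of_eventuallyEq (Filter.Eventually.of_forall fun x => (hF x))
  have hFcont : Continuous F := by
    have : Differentiable ℝ F := fun t => (hFd t).differentiableAt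
    exact this.continuous
  have hFpos : ∀ t > (0:ℝ), 0 < F t := by
    intro t ht
    have h := (hAR t ht).1
    nlinarith
  -- monotone auxiliary function g t = F t * t ^ (-θ)
  set g : ℝ → ℝ := fun t => F t * t ^ (-θ) with hg
  have hgd : ∀ t > (0:ℝ), HasDerivAt g ((f t * t^2 - θ * F t) * t ^ (-θ-1)) t := by
    intro t ht
    have hrp : HasDerivAt (fun x : ℝ => x ^ (-θ)) (-θ * t ^ (-θ-1)) t :=
      Real.hasDerivAt_rpow_const (Or.inl (ne_of_gt ht))
    have h := (hFd t).mul hrp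
    convert h using 1
    · rfl
    · rfl
    · rfl
    have h1 : t ^ (-θ) = t * t ^ (-θ-1) := by
      rw [← Real.rpow_one_add' (le_of_lt ht)]
      · ring_nf
      · linarith
    rw [h1]; ring
  have hmono : MonotoneOn g (Set.Ici (1:ℝ)) := by
    apply monotoneOn_of_deriv_nonneg (convex_Ici 1)
    · apply ContinuousOn.mul hFcont.continuousOn
      intro x hx
      exact (Real.continuousAt_rpow_const x (-θ) (Or.inl (by simp at hx; linarith))).continuousWithinAt
    · intro x hx
      rw [interior_Ici] at hx
      exact ((hgd x (by linarith [hx.out])).differentiableAt).differentiableWithinAt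
    · intro x hx
      rw [interior_Ici] at hx
      have hx1 : (0:ℝ) < x := by linarith [hx.out]
      rw [(hgd x hx1).deriv]
      have h2 := (hAR x hx1).2
      have : (0:ℝ) ≤ x ^ (-θ-1) := Real.rpow_nonneg (le_of_lt hx1) _
      nlinarith
  have key : ∀ t ≥ (1:ℝ), F 1 * t ^ θ ≤ F t := by
    intro t ht
    have h := hmono (Set.mem_Ici.2 le_rfl) (Set.mem_Ici.2 ht) ht
    simp only [hg, Real.one_rpow, mul_one] at h
    have ht0 : (0:ℝ) < t := by linarith
    have htθ : (0:ℝ) < t ^ θ := Real.rpow_pos_of_pos ht0 θ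
    have := mul_le_mul_of_nonneg_right h (le_of_lt htθ)
    rwa [mul_assoc, ← Real.rpow_add ht0, neg_add_cancel, Real.rpow_zero, mul_one] at this
  refine ⟨F 1, hFpos 1 one_pos, F 1, hFpos 1 one_pos, fun t ht => ?_⟩
  rcases eq_or_lt_of_le ht with h0 | h0
  · simp [← h0, hF, Real.zero_rpow (ne_of_gt hθ0)]
  rcases le_or_gt t 1 with h1 | h1
  · have hFt : 0 < F t := hFpos t h0
    have hle : t ^ θ ≤ t ^ (2:ℝ) := Real.rpow_le_rpow_of_exponent_ge h0 h1 (le_of_lt hθ)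
    have h2 : t ^ (2:ℝ) = t ^ (2:ℕ) := by
      rw [← Real.rpow_natCast]; norm_num
    rw [h2] at hle
    have : F 1 * t ^ θ - F 1 * t ^ 2 ≤ 0 := by nlinarith [hFpos 1 one_pos]
    linarith
  · have h := key t (le_of_lt h1)
    have : (0:ℝ) ≤ F 1 * t ^ 2 := mul_nonneg (hFpos 1 one_pos).le (sq_nonneg t)
    simp only [ge_iff_le]
    linarith
end

section
/- Let f : [0,∞) → ℝ be continuous, nondecreasing, with f(0) = 0, and suppose there exists θ > 2 such that 0 < θ·F(t) ≤ f(t)·t² for all t > 0, where F(t) = ∫₀ᵗ f(s)s ds. Then for all vectors u, v ∈ ℂ² with v ≠ 0 and all t ≥ 1: Re[f(|u|)·u·conj((t²/2)u − (1/2)u + t·v)] + F(|u|) − F(|t·u + v|) < 0. -/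
private lemma stmt6_key_ineq (f F : ℝ → ℝ) (hf_cont : Continuous f)
    (hf_mono : MonotoneOn f (Set.Ici (0:ℝ)))
    (hF : ∀ t : ℝ, F t = ∫ s in (0:ℝ)..t, f s * s)
    {a b : ℝ} (ha : 0 ≤ a) (hb : 0 ≤ b) :
    f a * (b ^ 2 - a ^ 2) / 2 ≤ F b - F a := by
  have hcont : Continuous (fun s => f s * s) := hf_cont.mul continuous_id
  have hint : ∀ x y : ℝ, IntervalIntegrable (fun s => f s * s) MeasureTheory.volume x y :=
    fun x y => hcont.intervalIntegrable x y
  have hint' : ∀ x y : ℝ, IntervalIntegrable (fun s => f a * s) MeasureTheory.volume x y :=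
    fun x y => (continuous_const.mul continuous_id).intervalIntegrable x y
  have hdiff : F b - F a = ∫ s in a..b, f s * s := by
    rw [hF, hF, ← intervalIntegral.integral_interval_sub_left (hint 0 b) (hint 0 a)]
  have hconst : ∀ x y : ℝ, (∫ s in x..y, f a * s) = f a * (y ^ 2 - x ^ 2) / 2 := by
    intro x y
    rw [intervalIntegral.integral_const_mul, integral_id]; ring
  rw [hdiff]
  rcases le_total a b with h | h
  · have hmono : ∫ s in a..b, f a * s ≤ ∫ s in a..b, f s * s := by
      apply intervalIntegral.integral_mono_on h (hint' a b) (hint a b)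
      intro s hs
      have hs0 : (0:ℝ) ≤ s := le_trans ha hs.1
      exact mul_le_mul_of_nonneg_right (hf_mono ha hs0 hs.1) hs0
    calc f a * (b ^ 2 - a ^ 2) / 2 = ∫ s in a..b, f a * s := (hconst a b).symm
    _ ≤ _ := hmono
  · have hmono : ∫ s in b..a, f s * s ≤ ∫ s in b..a, f a * s := by
      apply intervalIntegral.integral_mono_on h (hint b a) (hint' b a)
      intro s hs
      have hs0 : (0:ℝ) ≤ s := le_trans hb hs.1
      exact mul_le_mul_of_nonneg_right (hf_mono hs0 ha hs.2) hs0
    have h1 : (∫ s in a..b, f s * s) = -∫ s in b..a, f s * s :=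
      intervalIntegral.integral_symm b a
    have h2 := hconst b a
    rw [h1]; linarith

private lemma stmt6_re_smul (r : ℝ) (x y : EuclideanSpace ℂ (Fin 2)) :
    RCLike.re (inner ℂ (r • x) y : ℂ) = r * RCLike.re (inner ℂ x y : ℂ) := by
  rw [← algebraMap_smul ℂ r x, RCLike.algebraMap_eq_ofReal, inner_smul_real_left,
    RCLike.smul_re]

/-- Lemma 3.2 of the paper: for all `u v : ℂ²`, `v ≠ 0`, `t ≥ 1`,
`Re[f(|u|) u · conj((t²/2)u - (1/2)u + t v)] + F(|u|) - F(|t u + v|) < 0`.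
Here `u · conj w = ⟪w, u⟫` in Mathlib's convention (conjugate-linear in the
first slot). -/
theorem stmt_6 (f F : ℝ → ℝ) (θ : ℝ)
    (hf_cont : Continuous f) (hf0 : f 0 = 0)
    (hf_mono : MonotoneOn f (Set.Ici (0:ℝ)))
    (hθ : 2 < θ)
    (hF : ∀ t : ℝ, F t = ∫ s in (0:ℝ)..t, f s * s)
    (hAR : ∀ t > (0:ℝ), 0 < θ * F t ∧ θ * F t ≤ f t * t ^ 2) :
    ∀ (u v : EuclideanSpace ℂ (Fin 2)), v ≠ 0 → ∀ t ≥ (1:ℝ),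
      f ‖u‖ * (inner ℂ ((t ^ 2 / 2) • u - (1 / 2 : ℝ) • u + t • v) u : ℂ).re
        + F ‖u‖ - F ‖t • u + v‖ < 0 := by
  intro u v hv t ht
  have ht0 : (0:ℝ) ≤ t := le_trans zero_le_one ht
  set a : ℝ := ‖u‖ with ha_def
  set b : ℝ := ‖t • u + v‖ with hb_def
  set c : ℝ := RCLike.re (inner ℂ u v : ℂ) with hc_def
  have ha : 0 ≤ a := norm_nonneg u
  have hb : 0 ≤ b := norm_nonneg _
  -- inner product expansion
  have hre : (inner ℂ ((t ^ 2 / 2) • u - (1 / 2 : ℝ) • u + t • v) u : ℂ).re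
      = (t ^ 2 / 2 - 1 / 2) * a ^ 2 + t * c := by
    have h : RCLike.re (inner ℂ ((t ^ 2 / 2) • u - (1 / 2 : ℝ) • u + t • v) u : ℂ)
        = (t ^ 2 / 2 - 1 / 2) * a ^ 2 + t * c := by
      rw [inner_add_left, inner_sub_left, map_add, map_sub, stmt6_re_smul, stmt6_re_smul,
        stmt6_re_smul, inner_self_eq_norm_sq, inner_re_symm]
      ring
    simpa using h
  -- norm expansion
  have hbsq : b ^ 2 = t ^ 2 * a ^ 2 + 2 * (t * c) + ‖v‖ ^ 2 := by
    rw [hb_def, @norm_add_sq ℂ, stmt6_re_smul, norm_smul]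
    simp [abs_of_nonneg ht0, mul_pow, ha_def, hc_def]
  have hkey := stmt6_key_ineq f F hf_cont hf_mono hF ha hb
  have hv' : (0:ℝ) < ‖v‖ := norm_pos_iff.mpr hv
  rw [hre]
  rcases eq_or_lt_of_le ha with ha0 | ha0
  · -- u = 0
    have hu0 : u = 0 := norm_eq_zero.mp ha0.symm
    have hF0 : F 0 = 0 := by rw [hF]; simp
    have hFv := (hAR ‖v‖ hv').1
    have hFvpos : 0 < F ‖v‖ := by nlinarith
    have hb' : b = ‖v‖ := by rw [hb_def, hu0]; simp
    rw [← ha0, hf0, hF0, hb']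
    simpa using hFvpos
  · -- u ≠ 0, so f a > 0
    have hfa : 0 < f a := by
      have h1 := (hAR a ha0).1
      have h2 := (hAR a ha0).2
      nlinarith
    have hmain : f a * ((t ^ 2 / 2 - 1 / 2) * a ^ 2 + t * c) + F a - F b
        ≤ -(f a * ‖v‖ ^ 2) / 2 := by
      have : f a * (b ^ 2 - a ^ 2) / 2
          = f a * ((t ^ 2 / 2 - 1 / 2) * a ^ 2 + t * c) + f a * ‖v‖ ^ 2 / 2 := by
        rw [hbsq]; ring
      linarith
    have : 0 < f a * ‖v‖ ^ 2 := by positivity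
    linarith
end
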